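/- For all reals a > 0 and b > 0, (1/2)·(b − a)²/(a + b) ≤ a·log(2a/(a+b)) + b·log(2b/(a+b)), with strict inequality whenever a ≠ b. In words: the asymptotic growth rate of the Gaussian-approximation e-process is at most (and, off the null, strictly less than) the asymptotic growth rate of the exact Poisson e-process. -/

import Mathlib

open Real Set

private lemma hasDerivAt_G (x : ℝ) (h1 : -1 < x) (h2 : x < 1) :
    HasDerivAt (fun t : ℝ => Real.log (1+t) - Real.log (1-t) - 2*t)
      (1/(1+x) + 1/(1-x) - 2) x := by
  have hp : (1:ℝ) + x ≠ 0 := by linarith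
  have hm : (1:ℝ) - x ≠ 0 := by linarith
  have d1 : HasDerivAt (fun t : ℝ => Real.log (1+t)) (1/(1+x)) x := by
    have := (Real.hasDerivAt_log hp).comp x ((hasDerivAt_id x).const_add 1)
    simpa [one_div, Function.comp_def] using this
  have d2 : HasDerivAt (fun t : ℝ => Real.log (1-t)) (-(1/(1-x))) x := by
    have := (Real.hasDerivAt_log hm).comp x ((hasDerivAt_id x).const_sub 1)
    simpa [one_div, Function.comp_def] using this
  have d3 : HasDerivAt (fun t : ℝ => 2*t) 2 x := by
    simpa using (hasDerivAt_id x).const_mul 2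
  exact ((d1.sub d2).sub d3).congr_deriv (by ring)

private lemma hasDerivAt_F (x : ℝ) (h1 : -1 < x) (h2 : x < 1) :
    HasDerivAt (fun t : ℝ => (1+t) * Real.log (1+t) + (1-t) * Real.log (1-t) - t^2)
      (Real.log (1+x) - Real.log (1-x) - 2*x) x := by
  have hp : (1:ℝ) + x ≠ 0 := by linarith
  have hm : (1:ℝ) - x ≠ 0 := by linarith
  have l1 : HasDerivAt (fun t : ℝ => Real.log (1+t)) (1/(1+x)) x := by
    have := (Real.hasDerivAt_log hp).comp x ((hasDerivAt_id x).const_add 1)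
    simpa [one_div, Function.comp_def] using this
  have l2 : HasDerivAt (fun t : ℝ => Real.log (1-t)) (-(1/(1-x))) x := by
    have := (Real.hasDerivAt_log hm).comp x ((hasDerivAt_id x).const_sub 1)
    simpa [one_div, Function.comp_def] using this
  have p1 : HasDerivAt (fun t : ℝ => 1 + t) 1 x := (hasDerivAt_id x).const_add 1
  have p2 : HasDerivAt (fun t : ℝ => 1 - t) (-1) x := (hasDerivAt_id x).const_sub 1
  have m1 := p1.mul l1
  have m2 := p2.mul l2
  have sq : HasDerivAt (fun t : ℝ => t^2) (2*x) x := by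
    simpa using (hasDerivAt_pow 2 x)
  exact ((m1.add m2).sub sq).congr_deriv (by field_simp; ring)

private lemma G_pos {x : ℝ} (h1 : 0 < x) (h2 : x < 1) :
    0 < Real.log (1+x) - Real.log (1-x) - 2*x := by
  have mono : StrictMonoOn (fun t : ℝ => Real.log (1+t) - Real.log (1-t) - 2*t)
      (Ico (0:ℝ) 1) := by
    apply strictMonoOn_of_deriv_pos (convex_Ico 0 1)
    · intro y hy
      exact ((hasDerivAt_G y (by linarith [hy.1]) hy.2).continuousAt).continuousWithinAt
    · intro y hy
      rw [interior_Ico] at hy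
      rw [(hasDerivAt_G y (by linarith [hy.1]) hy.2).deriv]
      have hp : (0:ℝ) < 1 + y := by linarith [hy.1]
      have hm : (0:ℝ) < 1 - y := by linarith [hy.2]
      rw [div_add_div _ _ (ne_of_gt hp) (ne_of_gt hm)]
      rw [sub_pos, lt_div_iff₀ (by positivity)]
      nlinarith [hy.1, sq_nonneg y]
  have := mono (by constructor <;> norm_num) (by constructor <;> linarith) h1
  simpa using this

private lemma key_nonneg {t : ℝ} (h1 : 0 ≤ t) (h2 : t < 1) :
    t^2 ≤ (1+t) * Real.log (1+t) + (1-t) * Real.log (1-t) := by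
  rcases eq_or_lt_of_le h1 with h | h
  · simp [← h]
  · have mono : StrictMonoOn
        (fun t : ℝ => (1+t) * Real.log (1+t) + (1-t) * Real.log (1-t) - t^2)
        (Ico (0:ℝ) 1) := by
      apply strictMonoOn_of_deriv_pos (convex_Ico 0 1)
      · intro y hy
        exact ((hasDerivAt_F y (by linarith [hy.1]) hy.2).continuousAt).continuousWithinAt
      · intro y hy
        rw [interior_Ico] at hy
        rw [(hasDerivAt_F y (by linarith [hy.1]) hy.2).deriv]
        exact G_pos hy.1 hy.2
    have := mono (by constructor <;> norm_num) (by constructor <;> linarith) h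
    simp only [add_zero, sub_zero, Real.log_one] at this
    nlinarith [this]

private lemma key_pos {t : ℝ} (h1 : 0 < t) (h2 : t < 1) :
    t^2 < (1+t) * Real.log (1+t) + (1-t) * Real.log (1-t) := by
  have mono : StrictMonoOn
      (fun t : ℝ => (1+t) * Real.log (1+t) + (1-t) * Real.log (1-t) - t^2)
      (Ico (0:ℝ) 1) := by
    apply strictMonoOn_of_deriv_pos (convex_Ico 0 1)
    · intro y hy
      exact ((hasDerivAt_F y (by linarith [hy.1]) hy.2).continuousAt).continuousWithinAt
    · intro y hy
      rw [interior_Ico] at hy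
      rw [(hasDerivAt_F y (by linarith [hy.1]) hy.2).deriv]
      exact G_pos hy.1 hy.2
  have := mono (by constructor <;> norm_num) (by constructor <;> linarith) h1
  simp only [add_zero, sub_zero, Real.log_one] at this
  nlinarith [this]

private lemma key_all {t : ℝ} (h1 : -1 < t) (h2 : t < 1) :
    t^2 ≤ (1+t) * Real.log (1+t) + (1-t) * Real.log (1-t) ∧
    (t ≠ 0 → t^2 < (1+t) * Real.log (1+t) + (1-t) * Real.log (1-t)) := by
  rcases le_or_gt 0 t with h | h
  · refine ⟨key_nonneg h h2, fun ht => key_pos (lt_of_le_of_ne h (Ne.symm ht)) h2⟩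
  · have h1' : 0 < -t := by linarith
    have h2' : -t < 1 := by linarith
    have := key_pos h1' h2'
    rw [show (1:ℝ) + -t = 1 - t by ring, show (1:ℝ) - -t = 1 + t by ring, neg_sq] at this
    exact ⟨le_of_lt (by linarith), fun _ => by linarith⟩

theorem gaussian_rate_le_poisson_rate (a b : ℝ) (ha : 0 < a) (hb : 0 < b) :
    (1 / 2) * (b - a) ^ 2 / (a + b)
        ≤ a * Real.log (2 * a / (a + b)) + b * Real.log (2 * b / (a + b)) ∧
      (a ≠ b →
        (1 / 2) * (b - a) ^ 2 / (a + b)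
          < a * Real.log (2 * a / (a + b)) + b * Real.log (2 * b / (a + b))) := by
  have hs : 0 < a + b := by linarith
  obtain ⟨t, ht⟩ : ∃ t : ℝ, t = (a - b) / (a + b) := ⟨_, rfl⟩
  have ht1 : -1 < t := by
    rw [ht, lt_div_iff₀ hs] ; linarith
  have ht2 : t < 1 := by
    rw [ht, div_lt_iff₀ hs] ; linarith
  have e1 : 2 * a / (a + b) = 1 + t := by
    rw [ht] ; field_simp ; ring
  have e2 : 2 * b / (a + b) = 1 - t := by
    rw [ht] ; field_simp ; ring
  have ea : a = (a + b) / 2 * (1 + t) := by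
    rw [ht] ; field_simp ; ring
  have eb : b = (a + b) / 2 * (1 - t) := by
    rw [ht] ; field_simp ; ring
  have eL : (1 / 2) * (b - a) ^ 2 / (a + b) = (a + b) / 2 * t^2 := by
    rw [ht] ; field_simp ; ring
  have eR : a * Real.log (2 * a / (a + b)) + b * Real.log (2 * b / (a + b))
      = (a + b) / 2 * ((1+t) * Real.log (1+t) + (1-t) * Real.log (1-t)) := by
    rw [e1, e2]
    linear_combination Real.log (1+t) * ea + Real.log (1-t) * eb
  obtain ⟨hle, hlt⟩ := key_all ht1 ht2
  have hhalf : 0 < (a + b) / 2 := by linarith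
  constructor
  · rw [eL, eR]
    exact mul_le_mul_of_nonneg_left hle (le_of_lt hhalf)
  · intro hne
    have htne : t ≠ 0 := by
      rw [ht]
      exact div_ne_zero (sub_ne_zero.mpr hne) (ne_of_gt hs)
    rw [eL, eR]
    exact (mul_lt_mul_iff_right₀ hhalf).mpr (hlt htne)
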